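/- Let Ω and Ω' be positive semidefinite n×n complex matrices and let X be an n×n complex matrix with 0 ≤ X ≤ I. Then the trace norm of Ω^{1/2} X Ω^{1/2} − Ω'^{1/2} X Ω'^{1/2} satisfies ‖Ω^{1/2} X Ω^{1/2} − Ω'^{1/2} X Ω'^{1/2}‖₁ ≤ ((trace Ω)^{1/2} + (trace Ω')^{1/2}) · (‖Ω − Ω'‖₁)^{1/2}, where ‖M‖₁ = trace((M* M)^{1/2}) denotes the trace norm. -/

import Mathlib

open Matrix ComplexOrder

/-- The square root of a positive semidefinite matrix (removed from Mathlib; old definition). -/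
noncomputable def Matrix.PosSemidef.sqrt {n : ℕ} {A : Matrix (Fin n) (Fin n) ℂ} (hA : A.PosSemidef) :
    Matrix (Fin n) (Fin n) ℂ :=
  hA.1.eigenvectorUnitary.1 * diagonal ((↑) ∘ (Real.sqrt ·) ∘ hA.1.eigenvalues) *
    (star hA.1.eigenvectorUnitary : Matrix (Fin n) (Fin n) ℂ)

/-- The trace norm `‖M‖₁ = trace((Mᴴ M)^{1/2})` of a complex square matrix. -/
noncomputable def traceNorm {n : ℕ} (M : Matrix (Fin n) (Fin n) ℂ) : ℝ :=
  ((Matrix.posSemidef_conjTranspose_mul_self M).sqrt).trace.re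

open scoped MatrixOrder in
lemma Matrix.PosSemidef.sqrt_eq_cfc {n : ℕ} {A : Matrix (Fin n) (Fin n) ℂ} (hA : A.PosSemidef) :
    hA.sqrt = CFC.sqrt A := by
  rw [CFC.sqrt_eq_real_sqrt A hA.nonneg, cfcₙ_eq_cfc, hA.1.cfc_eq]
  rfl

open scoped MatrixOrder in
lemma Matrix.PosSemidef.posSemidef_sqrt {n : ℕ} {A : Matrix (Fin n) (Fin n) ℂ}
    (hA : A.PosSemidef) : hA.sqrt.PosSemidef := by
  rw [hA.sqrt_eq_cfc]; exact (CFC.sqrt_nonneg A).posSemidef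

open scoped MatrixOrder in
lemma Matrix.PosSemidef.sqrt_mul_self {n : ℕ} {A : Matrix (Fin n) (Fin n) ℂ}
    (hA : A.PosSemidef) : hA.sqrt * hA.sqrt = A := by
  rw [hA.sqrt_eq_cfc]; exact CFC.sqrt_mul_sqrt_self A hA.nonneg

open scoped MatrixOrder in
lemma Matrix.PosSemidef.eq_sqrt_of_sq_eq {n : ℕ} {A B : Matrix (Fin n) (Fin n) ℂ}
    (hA : A.PosSemidef) (hB : B.PosSemidef) (h : A ^ 2 = B) : A = hB.sqrt := by
  rw [hB.sqrt_eq_cfc]; exact (CFC.sqrt_unique (by rw [← pow_two]; exact h) hA.nonneg).symm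

namespace TraceNormAux

variable {n : ℕ}

/-- The squared Frobenius norm as the real part of `tr(MᴴM)`. -/
noncomputable def frob (M : Matrix (Fin n) (Fin n) ℂ) : ℝ := ((Mᴴ * M).trace).re

lemma diag_re_nonneg {P : Matrix (Fin n) (Fin n) ℂ} (hP : P.PosSemidef) (i : Fin n) :
    0 ≤ (P i i).re := by
  have h := hP.diag_nonneg (i := i)
  simpa using (Complex.le_def.mp h).1

lemma trace_re_nonneg {P : Matrix (Fin n) (Fin n) ℂ} (hP : P.PosSemidef) :
    0 ≤ P.trace.re := by
  rw [Matrix.trace, Complex.re_sum]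
  exact Finset.sum_nonneg fun i _ => diag_re_nonneg hP i

lemma frob_eq (M : Matrix (Fin n) (Fin n) ℂ) :
    frob M = ∑ p : Fin n × Fin n, ‖M p.1 p.2‖ ^ 2 := by
  rw [frob, Matrix.trace, Complex.re_sum, Fintype.sum_prod_type, Finset.sum_comm]
  refine Finset.sum_congr rfl fun j _ => ?_
  rw [Matrix.diag_apply, Matrix.mul_apply, Complex.re_sum]
  refine Finset.sum_congr rfl fun i _ => ?_
  rw [Matrix.conjTranspose_apply]
  rw [show (star (M i j)) * M i j = (Complex.normSq (M i j) : ℂ) by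
    rw [Complex.star_def, Complex.normSq_eq_conj_mul_self]]
  rw [Complex.ofReal_re, Complex.sq_norm]

/-- Cauchy–Schwarz for the Hilbert–Schmidt pairing. -/
lemma cs (M N : Matrix (Fin n) (Fin n) ℂ) :
    ((M * N).trace).re ≤ Real.sqrt (frob M) * Real.sqrt (frob N) := by
  have h1 : ((M * N).trace).re
      = ∑ p : Fin n × Fin n, (M p.1 p.2 * N p.2 p.1).re := by
    rw [Matrix.trace, Complex.re_sum, Fintype.sum_prod_type]
    refine Finset.sum_congr rfl fun i _ => ?_
    rw [Matrix.diag_apply, Matrix.mul_apply, Complex.re_sum]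
  rw [h1]
  have h2 : ∑ p : Fin n × Fin n, (M p.1 p.2 * N p.2 p.1).re
      ≤ ∑ p : Fin n × Fin n, ‖M p.1 p.2‖ * ‖N p.2 p.1‖ := by
    refine Finset.sum_le_sum fun p _ => ?_
    calc (M p.1 p.2 * N p.2 p.1).re ≤ ‖M p.1 p.2 * N p.2 p.1‖ :=
          Complex.re_le_norm _
      _ = ‖M p.1 p.2‖ * ‖N p.2 p.1‖ := norm_mul _ _
  refine h2.trans ?_
  have h3 := Real.sum_mul_le_sqrt_mul_sqrt Finset.univ
    (fun p : Fin n × Fin n => ‖M p.1 p.2‖)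
    (fun p : Fin n × Fin n => ‖N p.2 p.1‖)
  refine h3.trans_eq ?_
  congr 1
  · rw [frob_eq]
  · rw [frob_eq]
    exact congrArg _ (Fintype.sum_equiv (Equiv.prodComm _ _) _ _ (fun p => rfl))

/-- Trace contraction: if `Q ≤ 1` then `re tr(Mᴴ Q M) ≤ re tr(Mᴴ M)`. -/
lemma contraction {M Q : Matrix (Fin n) (Fin n) ℂ} (hQ : (1 - Q).PosSemidef) :
    ((Mᴴ * Q * M).trace).re ≤ ((Mᴴ * M).trace).re := by
  have h := trace_re_nonneg (hQ.conjTranspose_mul_mul_same M)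
  have h2 : Mᴴ * (1 - Q) * M = Mᴴ * M - Mᴴ * Q * M := by noncomm_ring
  rw [h2, Matrix.trace_sub, Complex.sub_re] at h
  linarith

lemma one_sub_sq {X : Matrix (Fin n) (Fin n) ℂ} (hX0 : X.PosSemidef)
    (hX1 : (1 - X).PosSemidef) : (1 - X * X).PosSemidef := by
  have hR := hX0.posSemidef_sqrt
  have hRR : hX0.sqrt * hX0.sqrt = X := hX0.sqrt_mul_self
  have hcomm : hX0.sqrt * X = X * hX0.sqrt := by
    have h := Matrix.mul_assoc hX0.sqrt hX0.sqrt hX0.sqrt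
    rw [hRR] at h
    exact h.symm
  have hcomm2 : hX0.sqrt * (1 - X) = (1 - X) * hX0.sqrt := by
    rw [Matrix.mul_sub, Matrix.sub_mul, Matrix.mul_one, Matrix.one_mul, hcomm]
  have key : hX0.sqrtᴴ * (1 - X) * hX0.sqrt = X * (1 - X) := by
    rw [hR.1, Matrix.mul_assoc, ← hcomm2, ← Matrix.mul_assoc, hRR]
  have h1 : (X * (1 - X)).PosSemidef := key ▸ hX1.conjTranspose_mul_mul_same _
  have h2 : 1 - X * X = (1 - X) + X * (1 - X) := by noncomm_ring
  rw [h2]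
  exact hX1.add h1

/-- Master spectral lemma: for Hermitian `S` there is a Hermitian involution `W`
with `W S` positive semidefinite, `(WS)² = SᴴS`, and `WS ± S` positive semidefinite. -/
lemma master {S : Matrix (Fin n) (Fin n) ℂ} (hS : S.IsHermitian) :
    ∃ W : Matrix (Fin n) (Fin n) ℂ, W.IsHermitian ∧ W * W = 1 ∧
      (W * S).PosSemidef ∧ (W * S) * (W * S) = Sᴴ * S ∧
      (W * S - S).PosSemidef ∧ (W * S + S).PosSemidef := by
  set U : Matrix (Fin n) (Fin n) ℂ := (hS.eigenvectorUnitary : Matrix (Fin n) (Fin n) ℂ) with hU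
  have hU1 : star U * U = 1 := (Matrix.mem_unitaryGroup_iff').mp hS.eigenvectorUnitary.2
  have hU2 : U * star U = 1 := (Matrix.mem_unitaryGroup_iff).mp hS.eigenvectorUnitary.2
  set ev : Fin n → ℝ := hS.eigenvalues with hev
  set cj : (Fin n → ℝ) → Matrix (Fin n) (Fin n) ℂ :=
    fun d => U * Matrix.diagonal (RCLike.ofReal ∘ d) * star U with hcj
  have hmul : ∀ d d' : Fin n → ℝ, cj d * cj d' = cj (fun i => d i * d' i) := by
    intro d d'
    rw [hcj]
    simp only [Matrix.mul_assoc]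
    rw [show star U * (U * (Matrix.diagonal (RCLike.ofReal ∘ d') * star U))
        = Matrix.diagonal (RCLike.ofReal ∘ d') * star U by
      rw [← Matrix.mul_assoc, hU1, Matrix.one_mul]]
    rw [← Matrix.mul_assoc (Matrix.diagonal (RCLike.ofReal ∘ d))
      (Matrix.diagonal (RCLike.ofReal ∘ d')) (star U), diagonal_mul_diagonal]
    congr 2
    funext i j
    by_cases h : i = j <;>
      simp [Matrix.diagonal_apply, h, Function.comp, Complex.ofReal_mul, Complex.ofReal_sub,
        Complex.ofReal_add]
  have hherm : ∀ d : Fin n → ℝ, (cj d).IsHermitian := by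
    intro d
    rw [hcj]
    simp only [Matrix.IsHermitian, Matrix.conjTranspose_mul, Matrix.star_eq_conjTranspose,
      Matrix.conjTranspose_conjTranspose, Matrix.diagonal_conjTranspose, Matrix.mul_assoc]
    have hst : star (RCLike.ofReal ∘ d : Fin n → ℂ) = RCLike.ofReal ∘ d := by
      funext i
      simp [Function.comp, RCLike.star_def]
    rw [hst]
  have hpsd : ∀ d : Fin n → ℝ, (∀ i, 0 ≤ d i) → (cj d).PosSemidef := by
    intro d hd
    rw [hcj]
    simp only [Matrix.star_eq_conjTranspose]
    refine Matrix.PosSemidef.mul_mul_conjTranspose_same ?_ U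
    exact Matrix.PosSemidef.diagonal fun i => RCLike.ofReal_nonneg.mpr (hd i)
  have hSdec : S = cj ev := hS.spectral_theorem
  have hsub : ∀ d d' : Fin n → ℝ, cj d - cj d' = cj (fun i => d i - d' i) := by
    intro d d'
    rw [hcj]
    simp only []
    rw [← Matrix.sub_mul, ← Matrix.mul_sub, Matrix.diagonal_sub]
    congr 2
    funext i j
    by_cases h : i = j <;>
      simp [Matrix.diagonal_apply, h, Function.comp, Complex.ofReal_mul, Complex.ofReal_sub,
        Complex.ofReal_add]
  have hadd : ∀ d d' : Fin n → ℝ, cj d + cj d' = cj (fun i => d i + d' i) := by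
    intro d d'
    rw [hcj]
    simp only []
    rw [← Matrix.add_mul, ← Matrix.mul_add, Matrix.diagonal_add]
    congr 2
    funext i j
    by_cases h : i = j <;>
      simp [Matrix.diagonal_apply, h, Function.comp, Complex.ofReal_mul, Complex.ofReal_sub,
        Complex.ofReal_add]
  set sgn : Fin n → ℝ := fun i => if ev i < 0 then -1 else 1 with hsgn
  have habs : (fun i => sgn i * ev i) = fun i => |ev i| := by
    funext i
    rw [hsgn]
    by_cases h : ev i < 0
    · simp [h, abs_of_neg h]
    · simp [h, abs_of_nonneg (not_lt.mp h)]
  refine ⟨cj sgn, hherm sgn, ?_, ?_, ?_, ?_, ?_⟩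
  · rw [hmul]
    have h1 : (fun i => sgn i * sgn i) = fun _ => (1 : ℝ) := by
      funext i
      rw [hsgn]
      by_cases h : ev i < 0 <;> simp [h]
    rw [h1]
    show U * Matrix.diagonal (RCLike.ofReal ∘ fun _ : Fin n => (1:ℝ)) * star U = 1
    rw [show Matrix.diagonal (RCLike.ofReal ∘ fun _ : Fin n => (1:ℝ))
        = (1 : Matrix (Fin n) (Fin n) ℂ) by
      ext i j
      by_cases h : i = j <;> simp [Matrix.diagonal_apply, Matrix.one_apply, h]]
    rw [Matrix.mul_one, hU2]
  · rw [hSdec, hmul, habs]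
    exact hpsd _ fun i => abs_nonneg _
  · rw [show Sᴴ = S from hS.eq, hSdec, hmul, habs, hmul, hmul]
    have h2 : (fun i => |ev i| * |ev i|) = fun i => ev i * ev i :=
      funext fun i => abs_mul_abs_self _
    rw [h2]
  · rw [hSdec, hmul, habs, hsub]
    exact hpsd _ fun i => sub_nonneg.mpr (le_abs_self _)
  · rw [hSdec, hmul, habs, hadd]
    refine hpsd _ fun i => ?_
    have := neg_abs_le (ev i)
    linarith

lemma traceNorm_eq_sign {S W : Matrix (Fin n) (Fin n) ℂ}
    (h1 : (W * S).PosSemidef) (h2 : (W * S) * (W * S) = Sᴴ * S) :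
    traceNorm S = ((W * S).trace).re := by
  unfold traceNorm
  rw [← h1.eq_sqrt_of_sq_eq (Matrix.posSemidef_conjTranspose_mul_self S)
    (by rw [pow_two]; exact h2)]

/-- Powers–Størmer inequality. -/
lemma powers_stormer {A B : Matrix (Fin n) (Fin n) ℂ}
    (hA : A.PosSemidef) (hB : B.PosSemidef) :
    (((A - B) * (A - B)).trace).re ≤ traceNorm (A * A - B * B) := by
  set C := A - B with hCdef
  have hC : C.IsHermitian := hA.1.sub hB.1
  set S := A * A - B * B with hSdef
  have hS : S.IsHermitian := by
    rw [hSdef, Matrix.IsHermitian, Matrix.conjTranspose_sub, Matrix.conjTranspose_mul,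
      Matrix.conjTranspose_mul, hA.1.eq, hB.1.eq]
  obtain ⟨W, hW, hWW, hWS, hWSsq, hPmS, hPpS⟩ := master hS
  set P := W * S with hPdef
  have htn : traceNorm S = P.trace.re := traceNorm_eq_sign hWS hWSsq
  set V : Matrix (Fin n) (Fin n) ℂ := (hC.eigenvectorUnitary : Matrix (Fin n) (Fin n) ℂ) with hV
  have hV1 : star V * V = 1 := (Matrix.mem_unitaryGroup_iff').mp hC.eigenvectorUnitary.2
  have hV2 : V * star V = 1 := (Matrix.mem_unitaryGroup_iff).mp hC.eigenvectorUnitary.2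
  set lam : Fin n → ℝ := hC.eigenvalues with hlam
  have hLam : star V * C * V = Matrix.diagonal (fun i => (lam i : ℂ)) :=
    by simpa [Function.comp_def] using hC.conjStarAlgAut_star_eigenvectorUnitary
  have htr : ∀ M : Matrix (Fin n) (Fin n) ℂ, (star V * M * V).trace = M.trace := by
    intro M
    rw [Matrix.trace_mul_comm, ← Matrix.mul_assoc, hV2, Matrix.one_mul]
  have hmulc : ∀ M N : Matrix (Fin n) (Fin n) ℂ,
      (star V * M * V) * (star V * N * V) = star V * (M * N) * V := by
    intro M N
    simp only [Matrix.mul_assoc]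
    rw [show V * (star V * (N * V)) = N * V by rw [← Matrix.mul_assoc, hV2, Matrix.one_mul]]
  have hconjpsd : ∀ {M : Matrix (Fin n) (Fin n) ℂ}, M.PosSemidef →
      (star V * M * V).PosSemidef := by
    intro M hM
    rw [Matrix.star_eq_conjTranspose]
    exact hM.conjTranspose_mul_mul_same V
  -- LHS
  have hlhs : ((C * C).trace).re = ∑ i, lam i ^ 2 := by
    rw [← htr (C * C), ← hmulc, hLam, diagonal_mul_diagonal, Matrix.trace_diagonal,
      Complex.re_sum]
    refine Finset.sum_congr rfl fun i _ => ?_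
    simp [Function.comp, ← Complex.ofReal_mul, pow_two]
  set D := A + B with hDdef
  have hDC : S + S = C * D + D * C := by rw [hSdef, hCdef, hDdef]; noncomm_ring
  have key : ∀ i, lam i ^ 2 ≤ ((star V * P * V) i i).re := by
    intro i
    have hps1 : 0 ≤ ((star V * P * V) i i).re - ((star V * S * V) i i).re := by
      have h := diag_re_nonneg (hconjpsd hPmS) i
      have hrw : star V * (P - S) * V = star V * P * V - star V * S * V := by
        rw [Matrix.mul_sub, Matrix.sub_mul]
      rw [hrw] at h
      rw [Matrix.sub_apply, Complex.sub_re] at h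
      exact h
    have hps2 : 0 ≤ ((star V * P * V) i i).re + ((star V * S * V) i i).re := by
      have h := diag_re_nonneg (hconjpsd hPpS) i
      have hrw : star V * (P + S) * V = star V * P * V + star V * S * V := by
        rw [Matrix.mul_add, Matrix.add_mul]
      rw [hrw] at h
      rw [Matrix.add_apply, Complex.add_re] at h
      exact h
    have hDmC : (D - C).PosSemidef := by
      have : D - C = B + B := by rw [hDdef, hCdef]; abel
      rw [this]; exact hB.add hB
    have hDpC : (D + C).PosSemidef := by
      have : D + C = A + A := by rw [hDdef, hCdef]; abel
      rw [this]; exact hA.add hA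
    have he1 : lam i ≤ ((star V * D * V) i i).re := by
      have h := diag_re_nonneg (hconjpsd hDmC) i
      have hrw : star V * (D - C) * V = star V * D * V - star V * C * V := by
        rw [Matrix.mul_sub, Matrix.sub_mul]
      rw [hrw, hLam] at h
      simp only [Matrix.sub_apply, Complex.sub_re, Matrix.diagonal_apply_eq,
        Complex.ofReal_re] at h
      linarith [h]
    have he2 : -lam i ≤ ((star V * D * V) i i).re := by
      have h := diag_re_nonneg (hconjpsd hDpC) i
      have hrw : star V * (D + C) * V = star V * D * V + star V * C * V := by
        rw [Matrix.mul_add, Matrix.add_mul]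
      rw [hrw, hLam] at h
      simp only [Matrix.add_apply, Complex.add_re, Matrix.diagonal_apply_eq,
        Complex.ofReal_re] at h
      linarith [h]
    have hs : ((star V * S * V) i i).re = lam i * ((star V * D * V) i i).re := by
      have h2S : star V * (S + S) * V
          = Matrix.diagonal (fun i => (lam i : ℂ)) * (star V * D * V)
            + (star V * D * V) * Matrix.diagonal (fun i => (lam i : ℂ)) := by
        rw [hDC, Matrix.mul_add, Matrix.add_mul, ← hLam]
        rw [show star V * (C * D) * V = (star V * C * V) * (star V * D * V) from
          (hmulc C D).symm]
        rw [show star V * (D * C) * V = (star V * D * V) * (star V * C * V) from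
          (hmulc D C).symm]
      have hdiagentry : ((star V * (S + S) * V) i i).re
          = 2 * (lam i * ((star V * D * V) i i).re) := by
        rw [h2S]
        simp only [Matrix.add_apply, Complex.add_re, Matrix.diagonal_mul,
          Matrix.mul_diagonal]
        rw [Complex.re_ofReal_mul, mul_comm ((star V * D * V) i i) _,
          Complex.re_ofReal_mul]
        ring
      have hSS : star V * (S + S) * V = star V * S * V + star V * S * V := by
        rw [Matrix.mul_add, Matrix.add_mul]
      rw [hSS] at hdiagentry
      simp only [Matrix.add_apply, Complex.add_re] at hdiagentry
      linarith
    rcases le_or_gt 0 (lam i) with h0 | h0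
    · have : lam i * lam i ≤ lam i * ((star V * D * V) i i).re :=
        mul_le_mul_of_nonneg_left he1 h0
      rw [pow_two]
      linarith [hps1, hs.symm ▸ this]
    · have h0' : 0 ≤ -lam i := by linarith
      have : (-lam i) * (-lam i) ≤ (-lam i) * ((star V * D * V) i i).re :=
        mul_le_mul_of_nonneg_left he2 h0'
      rw [pow_two]
      nlinarith [hps2, hs]
  calc ((C * C).trace).re = ∑ i, lam i ^ 2 := hlhs
    _ ≤ ∑ i, ((star V * P * V) i i).re := Finset.sum_le_sum fun i _ => key i
    _ = ((star V * P * V).trace).re := by rw [Matrix.trace, Complex.re_sum]; rfl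
    _ = P.trace.re := by rw [htr]
    _ = traceNorm S := htn.symm

end TraceNormAux

set_option maxHeartbeats 1600000 in
open TraceNormAux in
/-- For positive semidefinite `Ω`, `Ω'` and `0 ≤ X ≤ I`,
`‖Ω^{1/2}XΩ^{1/2} − Ω'^{1/2}XΩ'^{1/2}‖₁ ≤ (√tr Ω + √tr Ω')·(‖Ω − Ω'‖₁)^{1/2}`. -/
theorem stmt12 {n : ℕ} (Ω Ω' X : Matrix (Fin n) (Fin n) ℂ)
    (hΩ : Ω.PosSemidef) (hΩ' : Ω'.PosSemidef)
    (hX0 : X.PosSemidef) (hX1 : (1 - X).PosSemidef) :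
    traceNorm (hΩ.sqrt * X * hΩ.sqrt - hΩ'.sqrt * X * hΩ'.sqrt)
      ≤ (Real.sqrt Ω.trace.re + Real.sqrt Ω'.trace.re) * Real.sqrt (traceNorm (Ω - Ω')) := by
  set A := hΩ.sqrt with hAdef
  set B := hΩ'.sqrt with hBdef
  have hA : A.PosSemidef := hΩ.posSemidef_sqrt
  have hB : B.PosSemidef := hΩ'.posSemidef_sqrt
  have hAA : A * A = Ω := hΩ.sqrt_mul_self
  have hBB : B * B = Ω' := hΩ'.sqrt_mul_self
  set T := A * X * A - B * X * B with hTdef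
  have hT : T.IsHermitian := by
    rw [hTdef, Matrix.IsHermitian, Matrix.conjTranspose_sub]
    simp only [Matrix.conjTranspose_mul, hA.1.eq, hB.1.eq, hX0.1.eq]
    noncomm_ring
  obtain ⟨W, hW, hWW, hWT, hWTsq, _, _⟩ := master hT
  have htn : traceNorm T = ((W * T).trace).re := traceNorm_eq_sign hWT hWTsq
  set C := A - B with hCdef
  have hsplit : W * T = (W * A * X) * C + W * C * X * B := by
    rw [hTdef, hCdef]; noncomm_ring
  have htr2 : (W * C * X * B).trace = ((X * B * W) * C).trace := by
    rw [show W * C * X * B = (W * C) * (X * B) by noncomm_ring,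
      Matrix.trace_mul_comm, show (X * B) * (W * C) = (X * B * W) * C by noncomm_ring]
  have hXX : (1 - X * X).PosSemidef := one_sub_sq hX0 hX1
  -- frob bounds
  have hfrob1 : frob (W * A * X) ≤ Ω.trace.re := by
    have e1 : (W * A * X)ᴴ * (W * A * X) = X * A * (W * W) * (A * X) := by
      simp only [Matrix.conjTranspose_mul, hW.eq, hA.1.eq, hX0.1.eq]
      noncomm_ring
    rw [frob, e1, hWW, Matrix.mul_one]
    rw [Matrix.trace_mul_comm]
    rw [show (A * X) * (X * A) = Aᴴ * (X * X) * A by rw [hA.1.eq]; noncomm_ring]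
    have h2 := contraction (M := A) hXX
    rw [show Aᴴ * A = Ω by rw [hA.1.eq]; exact hAA] at h2
    exact h2
  have hfrob2 : frob (X * B * W) ≤ Ω'.trace.re := by
    have e1 : (X * B * W)ᴴ * (X * B * W) = W * ((B * (X * X) * B) * W) := by
      simp only [Matrix.conjTranspose_mul, hW.eq, hB.1.eq, hX0.1.eq]
      noncomm_ring
    rw [frob, e1, Matrix.trace_mul_comm,
      show (B * (X * X) * B * W) * W = B * (X * X) * B * (W * W) by noncomm_ring,
      hWW, Matrix.mul_one]
    rw [show B * (X * X) * B = Bᴴ * (X * X) * B by rw [hB.1.eq]]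
    have h2 := contraction (M := B) hXX
    rw [show Bᴴ * B = Ω' by rw [hB.1.eq]; exact hBB] at h2
    exact h2
  have hfC : frob C ≤ traceNorm (Ω - Ω') := by
    have : frob C = ((C * C).trace).re := by rw [frob, (hA.1.sub hB.1).eq]
    rw [this]
    have h := powers_stormer hA hB
    rw [hAA, hBB] at h
    exact h
  -- assemble
  have hb1 : ((W * A * X * C).trace).re ≤ Real.sqrt (frob (W * A * X)) * Real.sqrt (frob C) :=
    cs (W * A * X) C
  have hb2 : ((W * C * X * B).trace).re ≤ Real.sqrt (frob (X * B * W)) * Real.sqrt (frob C) := by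
    rw [htr2]; exact cs (X * B * W) C
  have hsum : ((W * T).trace).re
      = ((W * A * X * C).trace).re + ((W * C * X * B).trace).re := by
    rw [hsplit, Matrix.trace_add, Complex.add_re]
  have hfCnn : (0:ℝ) ≤ Real.sqrt (frob C) := Real.sqrt_nonneg _
  have hs1 : Real.sqrt (frob (W * A * X)) ≤ Real.sqrt Ω.trace.re := Real.sqrt_le_sqrt hfrob1
  have hs2 : Real.sqrt (frob (X * B * W)) ≤ Real.sqrt Ω'.trace.re := Real.sqrt_le_sqrt hfrob2
  have hsC : Real.sqrt (frob C) ≤ Real.sqrt (traceNorm (Ω - Ω')) := Real.sqrt_le_sqrt hfC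
  calc traceNorm T = ((W * T).trace).re := htn
    _ = ((W * A * X * C).trace).re + ((W * C * X * B).trace).re := hsum
    _ ≤ Real.sqrt (frob (W * A * X)) * Real.sqrt (frob C)
        + Real.sqrt (frob (X * B * W)) * Real.sqrt (frob C) := add_le_add hb1 hb2
    _ ≤ Real.sqrt Ω.trace.re * Real.sqrt (frob C)
        + Real.sqrt Ω'.trace.re * Real.sqrt (frob C) :=
          add_le_add (mul_le_mul_of_nonneg_right hs1 hfCnn)
            (mul_le_mul_of_nonneg_right hs2 hfCnn)
    _ = (Real.sqrt Ω.trace.re + Real.sqrt Ω'.trace.re) * Real.sqrt (frob C) := by ring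
    _ ≤ (Real.sqrt Ω.trace.re + Real.sqrt Ω'.trace.re) * Real.sqrt (traceNorm (Ω - Ω')) := by
        refine mul_le_mul_of_nonneg_left hsC ?_
        positivity
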